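/- For b ≥ 1, the generating function for (n,b)-domino stacks is H_b(x) = Σ_{n≥0} h_b(n) x^n = (x^b/(1−x^b)) · Σ_S Π_{j=1}^{m} (2(k_{j+1}−k_j)+1) x^{k_j}/(1−x^{k_j}), where the sum is over all subsets S ⊆ {1,...,b−1}, S is written in increasing order as {k_1 < ... < k_m}, and k_{m+1} = b. -/

import Mathlib

/-- `hFun b n` is the number of `(n,b)`-domino stacks, defined by the recurrence
`h_b(n) = Σ_{i=1}^{b} (2(b-i)+1) h_i(n-b)` with `h_b(b) = 1` and `h_b(n) = 0`
when `n < 1`, `b < 1`, or `n < b`. -/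
def hFun : ℕ → ℕ → ℕ
  | b, n =>
    if b = 0 ∨ n ≤ b then (if n = b ∧ 1 ≤ b then 1 else 0)
    else ∑ i ∈ Finset.Icc 1 b, (2 * (b - i) + 1) * hFun i (n - b)
termination_by b n => n
decreasing_by omega

/-- For `S` the ordered subset `{k_1 < k_2 < ⋯ < k_m}` with the convention `k_{m+1} = b`,
`nextIn b S k` is the successor of `k` in `S`, i.e. given `k = k_j` it returns `k_{j+1}`
(the least element of `S` greater than `k`, or `b` if there is none). -/
def nextIn (b : ℕ) (S : Finset ℕ) (k : ℕ) : ℕ :=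
  (insert b (S.filter (fun m => k < m))).min' (Finset.insert_nonempty _ _)

open PowerSeries Finset

noncomputable def Hgf (b : ℕ) : PowerSeries ℚ := PowerSeries.mk fun n => (hFun b n : ℚ)

lemma hFun_zero_right {i : ℕ} (hi : 1 ≤ i) : hFun i 0 = 0 := by
  rw [hFun]
  rw [if_pos (Or.inr (Nat.zero_le _)), if_neg (by omega)]

lemma Hgf_rec (b : ℕ) (hb : 1 ≤ b) :
    Hgf b = X ^ b * (1 + ∑ i ∈ Icc 1 b, ((2 * (b - i) + 1 : ℕ) : PowerSeries ℚ) * Hgf i) := by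
  ext n
  rw [mul_comm, PowerSeries.coeff_mul_X_pow']
  simp only [map_add, map_sum, Hgf, coeff_mk, PowerSeries.coeff_one,
    ← map_natCast (C (R := ℚ)), coeff_C_mul]
  rw [hFun]
  by_cases hn : n ≤ b
  · by_cases hnb : n = b
    · rw [if_pos (Or.inr hn), if_pos ⟨hnb, hb⟩, if_pos (le_of_eq hnb.symm)]
      rw [if_pos (by omega)]
      have : ∀ i ∈ Icc 1 b, ((2 * (b - i) + 1 : ℕ) : ℚ) * (hFun i (n - b) : ℚ) = 0 := by
        intro i hi
        rw [show n - b = 0 by omega, hFun_zero_right (mem_Icc.mp hi).1]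
        simp
      rw [Finset.sum_congr rfl this]
      simp
    · rw [if_pos (Or.inr hn), if_neg (by tauto)]
      rw [if_neg (by omega)]
      simp
  · rw [if_neg (by omega), if_pos (by omega), if_neg (by omega), zero_add]
    push_cast
    rfl

lemma Hgf_eq (b : ℕ) (hb : 1 ≤ b) :
    Hgf b = X ^ b * (1 - X ^ b)⁻¹ *
      (1 + ∑ i ∈ Icc 1 (b - 1), ((2 * (b - i) + 1 : ℕ) : PowerSeries ℚ) * Hgf i) := by
  have hc : constantCoeff (R := ℚ) (1 - X ^ b) ≠ 0 := by
    simp [zero_pow (by omega : b ≠ 0)]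
  have hrec := Hgf_rec b hb
  have hIcc : Icc 1 b = insert b (Icc 1 (b - 1)) := by
    ext m; simp [mem_Icc]; omega
  have hbmem : b ∉ Icc 1 (b - 1) := by simp [mem_Icc]; omega
  rw [hIcc, Finset.sum_insert hbmem, Nat.sub_self] at hrec
  have h1 : ((2 * 0 + 1 : ℕ) : PowerSeries ℚ) = 1 := by norm_num
  rw [h1, one_mul] at hrec
  -- hrec : Hgf b = X ^ b * (1 + (Hgf b + ∑ ...))
  have key : Hgf b * (1 - X ^ b) =
      X ^ b * (1 + ∑ i ∈ Icc 1 (b - 1), ((2 * (b - i) + 1 : ℕ) : PowerSeries ℚ) * Hgf i) := by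
    linear_combination hrec
  calc Hgf b = Hgf b * ((1 - X ^ b) * (1 - X ^ b)⁻¹) := by
        rw [PowerSeries.mul_inv_cancel _ hc, mul_one]
    _ = (Hgf b * (1 - X ^ b)) * (1 - X ^ b)⁻¹ := by ring
    _ = _ := by rw [key]; ring

noncomputable def Fterm (b : ℕ) (S : Finset ℕ) : PowerSeries ℚ :=
  ∏ k ∈ S, (((2 * (nextIn b S k - k) + 1 : ℕ) : PowerSeries ℚ) * X ^ k * (1 - X ^ k)⁻¹)

noncomputable def Gsum (b : ℕ) : PowerSeries ℚ :=
  ∑ S ∈ (Icc 1 (b - 1)).powerset, Fterm b S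

lemma min'_congr {s t : Finset ℕ} (hs : s.Nonempty) (h : s = t) :
    s.min' hs = t.min' (h ▸ hs) := by subst h; rfl

lemma maxD_mem {S : Finset ℕ} (h : S.Nonempty) : S.max.getD 0 ∈ S := by
  obtain ⟨m, hm⟩ := Finset.max_of_nonempty h
  rw [hm]; exact Finset.mem_of_max hm

lemma le_maxD {S : Finset ℕ} {k : ℕ} (hk : k ∈ S) : k ≤ S.max.getD 0 := by
  obtain ⟨m, hm⟩ := Finset.max_of_nonempty ⟨k, hk⟩
  rw [hm]; exact Finset.le_max_of_eq hk hm

lemma maxD_insert {i : ℕ} {T : Finset ℕ} (hT : ∀ m ∈ T, m ≤ i) :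
    (insert i T).max.getD 0 = i := by
  apply le_antisymm
  · have hmem := maxD_mem (Finset.insert_nonempty i T)
    rcases Finset.mem_insert.mp hmem with h | h
    · omega
    · exact hT _ h
  · exact le_maxD (Finset.mem_insert_self _ _)

lemma nextIn_insert_self (b i : ℕ) (T : Finset ℕ) (hT : ∀ m ∈ T, m < i) :
    nextIn b (insert i T) i = b := by
  unfold nextIn
  have h0 : (insert i T).filter (fun m => i < m) = ∅ := by
    rw [Finset.filter_eq_empty_iff]
    intro m hm
    rcases Finset.mem_insert.mp hm with h | h
    · omega
    · have := hT m h; omega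
  simp [h0]

lemma nextIn_insert_of_mem (b i k : ℕ) (T : Finset ℕ) (hki : k < i) (hib : i ≤ b) :
    nextIn b (insert i T) k = nextIn i T k := by
  unfold nextIn
  have hf : (insert i T).filter (fun m => k < m) = insert i (T.filter (fun m => k < m)) := by
    rw [Finset.filter_insert, if_pos hki]
  rw [min'_congr _ (by rw [hf])]
  set A := insert i (T.filter (fun m => k < m)) with hA
  apply le_antisymm
  · exact Finset.min'_le _ _ (Finset.mem_insert_of_mem (A.min'_mem (Finset.insert_nonempty _ _)))
  · have hmem := (insert b A).min'_mem (Finset.insert_nonempty _ _)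
    rcases Finset.mem_insert.mp hmem with h | h
    · rw [h]
      exact le_trans (Finset.min'_le _ i (Finset.mem_insert_self _ _)) hib
    · exact Finset.min'_le _ _ h

lemma Fterm_insert (b i : ℕ) (T : Finset ℕ) (hT : T ⊆ Icc 1 (i - 1)) (hi : 1 ≤ i)
    (hib : i ≤ b) :
    Fterm b (insert i T) =
      ((2 * (b - i) + 1 : ℕ) : PowerSeries ℚ) * X ^ i * (1 - X ^ i)⁻¹ * Fterm i T := by
  have hlt : ∀ m ∈ T, m < i := by
    intro m hm; have := mem_Icc.mp (hT hm); omega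
  have hiT : i ∉ T := fun h => absurd (hlt i h) (lt_irrefl i)
  unfold Fterm
  rw [Finset.prod_insert hiT, nextIn_insert_self b i T hlt]
  congr 1
  apply Finset.prod_congr rfl
  intro k hk
  rw [nextIn_insert_of_mem b i k T (hlt k hk) hib]

lemma Gsum_rec (b : ℕ) (hb : 1 ≤ b) :
    Gsum b = 1 + ∑ i ∈ Icc 1 (b - 1),
      ((2 * (b - i) + 1 : ℕ) : PowerSeries ℚ) * (X ^ i * (1 - X ^ i)⁻¹ * Gsum i) := by
  unfold Gsum
  rw [← Finset.insert_erase (Finset.empty_mem_powerset (Icc 1 (b - 1))),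
    Finset.sum_insert (Finset.notMem_erase _ _)]
  have hempty : Fterm b ∅ = 1 := by simp [Fterm]
  rw [hempty]
  congr 1
  have hstep : ∀ i ∈ Icc 1 (b - 1),
      ((2 * (b - i) + 1 : ℕ) : PowerSeries ℚ) * (X ^ i * (1 - X ^ i)⁻¹ *
        ∑ T ∈ (Icc 1 (i - 1)).powerset, Fterm i T) =
      ∑ T ∈ (Icc 1 (i - 1)).powerset,
        ((2 * (b - i) + 1 : ℕ) : PowerSeries ℚ) * (X ^ i * (1 - X ^ i)⁻¹ * Fterm i T) := by
    intro i _
    rw [Finset.mul_sum, Finset.mul_sum]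
  rw [Finset.sum_congr rfl hstep, Finset.sum_sigma']
  symm
  refine Finset.sum_bij' (fun p _ => insert p.1 p.2)
    (fun S _ => (⟨S.max.getD 0, S.erase (S.max.getD 0)⟩ : Σ _ : ℕ, Finset ℕ)) ?_ ?_ ?_ ?_ ?_
  · -- insert lands in erased powerset
    rintro ⟨i, T⟩ hp
    dsimp only at hp ⊢
    rw [Finset.mem_sigma] at hp
    obtain ⟨hp1, hp2⟩ := hp
    rw [Finset.mem_powerset] at hp2
    have hp1' : i ∈ Icc 1 (b - 1) := hp1
    have hp2' : T ⊆ Icc 1 (i - 1) := hp2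
    rw [Finset.mem_erase]
    refine ⟨Finset.insert_ne_empty _ _, Finset.mem_powerset.mpr ?_⟩
    rw [Finset.insert_subset_iff]
    refine ⟨hp1', hp2'.trans (Finset.Icc_subset_Icc_right ?_)⟩
    have := mem_Icc.mp hp1'; omega
  · -- max/erase pair lands in sigma set
    intro S hS
    obtain ⟨hne, hsub⟩ := Finset.mem_erase.mp hS
    rw [Finset.mem_powerset] at hsub
    have hNe : S.Nonempty := Finset.nonempty_of_ne_empty hne
    have hmem : S.max.getD 0 ∈ S := maxD_mem hNe
    rw [Finset.mem_sigma]
    refine ⟨hsub hmem, Finset.mem_powerset.mpr ?_⟩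
    intro k hk
    have hkS := Finset.mem_of_mem_erase hk
    have hkm : k ≠ S.max.getD 0 := Finset.ne_of_mem_erase hk
    have hle : k ≤ S.max.getD 0 := le_maxD hkS
    have h1 : 1 ≤ k := (mem_Icc.mp (hsub hkS)).1
    exact mem_Icc.mpr ⟨h1, show k ≤ Option.getD S.max 0 - 1 by omega⟩
  · -- j ∘ i = id on sigma
    rintro ⟨i, T⟩ hp
    dsimp only at hp ⊢
    rw [Finset.mem_sigma] at hp
    obtain ⟨hp1, hp2⟩ := hp
    rw [Finset.mem_powerset] at hp2
    have hp1' : i ∈ Icc 1 (b - 1) := hp1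
    have hp2' : T ⊆ Icc 1 (i - 1) := hp2
    have hlt : ∀ m ∈ T, m < i := by
      intro m hm; have := mem_Icc.mp (hp2' hm); have hi1 := (mem_Icc.mp hp1').1; omega
    have hiT : i ∉ T := fun h => absurd (hlt i h) (lt_irrefl i)
    have hmax : (insert i T).max.getD 0 = i := maxD_insert (fun m hm => le_of_lt (hlt m hm))
    simp only [hmax, Finset.erase_insert hiT]
  · -- i ∘ j = id on erased powerset
    intro S hS
    obtain ⟨hne, _⟩ := Finset.mem_erase.mp hS
    exact Finset.insert_erase (maxD_mem (Finset.nonempty_of_ne_empty hne))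
  · -- values agree
    rintro ⟨i, T⟩ hp
    dsimp only at hp ⊢
    rw [Finset.mem_sigma] at hp
    obtain ⟨hp1, hp2⟩ := hp
    rw [Finset.mem_powerset] at hp2
    have hp1' : i ∈ Icc 1 (b - 1) := hp1
    have hp2' : T ⊆ Icc 1 (i - 1) := hp2
    obtain ⟨hi1, hi2⟩ := mem_Icc.mp hp1'
    rw [Fterm_insert b i T hp2' hi1 (by omega)]
    ring

lemma main_key : ∀ b, 1 ≤ b → Hgf b = X ^ b * (1 - X ^ b)⁻¹ * Gsum b := by
  intro b
  induction b using Nat.strong_induction_on with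
  | _ b ih =>
    intro hb
    rw [Hgf_eq b hb, Gsum_rec b hb]
    congr 2
    apply Finset.sum_congr rfl
    intro i hi
    obtain ⟨hi1, hi2⟩ := mem_Icc.mp hi
    rw [ih i (by omega) hi1]


open PowerSeries in
/-- For `b ≥ 1`, the generating function for `(n,b)`-domino stacks is
`H_b(x) = (x^b/(1-x^b)) Σ_S Π_{j=1}^{m} (2(k_{j+1}-k_j)+1) x^{k_j}/(1-x^{k_j})`, the sum
being over all subsets `S = {k_1 < ⋯ < k_m} ⊆ {1,…,b-1}`, with `k_{m+1} = b`. -/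
theorem domino_stack_genFun (b : ℕ) (hb : 1 ≤ b) :
    PowerSeries.mk (fun n => (hFun b n : ℚ)) =
      (X : PowerSeries ℚ) ^ b * (1 - (X : PowerSeries ℚ) ^ b)⁻¹ *
        ∑ S ∈ (Finset.Icc 1 (b - 1)).powerset, ∏ k ∈ S,
          (((2 * (nextIn b S k - k) + 1 : ℕ) : PowerSeries ℚ) *
            (X : PowerSeries ℚ) ^ k * (1 - (X : PowerSeries ℚ) ^ k)⁻¹) := by
  exact main_key b hb
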